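/- Let E be the group with presentation ⟨a, x, y | x^a = x⁻¹, y^a = x^k y⁻¹, [x,y,y] = [x,y,x] = 1⟩ where k is an integer. Then for every n ≥ 0, the element [x, a, …, a, y] (with n copies of a, left-normed) equals [x,y]^{(-2)^n} in E. -/
import Mathlib

/-- The commutator `[a,b] = a⁻¹ b⁻¹ a b` (as in the paper). -/
def cmt {G : Type*} [Group G] (a b : G) : G := a⁻¹ * b⁻¹ * a * b

namespace Stmt13

/-- Generators: `0 ↦ a`, `1 ↦ x`, `2 ↦ y`. -/
def a' : FreeGroup (Fin 3) := FreeGroup.of 0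
def x' : FreeGroup (Fin 3) := FreeGroup.of 1
def y' : FreeGroup (Fin 3) := FreeGroup.of 2

/-- The relators of `E = ⟨a, x, y ∣ x^a = x⁻¹, y^a = x^k y⁻¹, [x,y,y] = [x,y,x] = 1⟩`;
here `g^a = a⁻¹ g a`, and the relators are `(x^a)·x`, `(y^a)·(x^k y⁻¹)⁻¹`,
`[x,y,y]` and `[x,y,x]`. -/
def rels (k : ℤ) : Set (FreeGroup (Fin 3)) :=
  {(a'⁻¹ * x' * a') * x',
   (a'⁻¹ * y' * a') * (x' ^ k * y'⁻¹)⁻¹,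
   cmt (cmt x' y') y',
   cmt (cmt x' y') x'}

/-- The group `E_k` given by the above presentation. -/
def E (k : ℤ) : Type := PresentedGroup (rels k)

instance (k : ℤ) : Group (E k) := by unfold E; infer_instance

def A (k : ℤ) : E k := PresentedGroup.of 0
def X (k : ℤ) : E k := PresentedGroup.of 1
def Y (k : ℤ) : E k := PresentedGroup.of 2

/-- The left-normed iterated commutator `[x, a, …, a]` with `n` copies of `a`. -/
def inner (k : ℤ) : ℕ → E k
  | 0 => X k
  | n + 1 => cmt (inner k n) (A k)

lemma rel_one {k : ℤ} {r : FreeGroup (Fin 3)} (h : r ∈ rels k) :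
    PresentedGroup.mk (rels k) r = 1 :=
  (QuotientGroup.eq_one_iff r).2 (Subgroup.subset_normalClosure h)

lemma mk_of (k : ℤ) (i : Fin 3) :
    PresentedGroup.mk (rels k) (FreeGroup.of i) = PresentedGroup.of i := rfl

lemma commute_of_cmt {G : Type*} [Group G] {a b : G} (h : cmt a b = 1) : Commute a b := by
  simp only [cmt] at h
  have h' : a * b = b * a := by
    have := congrArg (fun z => b * a * z) h
    simpa [mul_assoc] using this
  exact h'

lemma hX (k : ℤ) : (A k)⁻¹ * X k * A k = (X k)⁻¹ := by
  have := rel_one (k := k) (r := (a'⁻¹ * x' * a') * x') (by left; rfl)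
  simp only [map_mul, map_inv, a', x', mk_of] at this
  change (A k)⁻¹ * X k * A k * X k = 1 at this
  rw [mul_eq_one_iff_eq_inv] at this
  exact this

lemma hCX (k : ℤ) : Commute (cmt (X k) (Y k)) (X k) := by
  have := rel_one (k := k) (r := cmt (cmt x' y') x') (by right; right; right; rfl)
  simp only [cmt, map_mul, map_inv, x', y', mk_of] at this
  exact commute_of_cmt (a := cmt (X k) (Y k)) (b := X k) this

lemma conj_zpow' {G : Type*} [Group G] (g x : G) (m : ℤ) :
    g⁻¹ * x ^ m * g = (g⁻¹ * x * g) ^ m := by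
  have := map_zpow ((MulAut.conj g⁻¹).toMonoidHom) x m
  simpa [MulAut.conj_apply, mul_assoc] using this

lemma inner_eq (k : ℤ) (n : ℕ) : inner k n = X k ^ ((-2 : ℤ) ^ n) := by
  induction n with
  | zero => simp [inner]
  | succ n ih =>
    rw [inner, ih, cmt]
    rw [show (X k ^ ((-2:ℤ)^n))⁻¹ * (A k)⁻¹ * X k ^ ((-2:ℤ)^n) * A k
        = (X k ^ ((-2:ℤ)^n))⁻¹ * ((A k)⁻¹ * X k ^ ((-2:ℤ)^n) * A k) by group]
    rw [conj_zpow' (A k) (X k) ((-2 : ℤ) ^ n), hX k]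
    rw [← zpow_neg, ← zpow_neg_one, ← zpow_mul, ← zpow_add]
    congr 1
    ring

end Stmt13

open Stmt13 in
/-- In `E = ⟨a, x, y ∣ x^a = x⁻¹, y^a = x^k y⁻¹, [x,y,y] = [x,y,x] = 1⟩`,
for every `n ≥ 0` the left-normed commutator `[x, a, …, a, y]` (with `n` copies of `a`)
equals `[x,y]^{(-2)^n}`. -/
theorem stmt13 (k : ℤ) (n : ℕ) :
    cmt (inner k n) (Y k) = (cmt (X k) (Y k)) ^ ((-2 : ℤ) ^ n) := by
  rw [inner_eq]
  set m : ℤ := (-2 : ℤ) ^ n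
  have hc : (Y k)⁻¹ * X k * Y k = X k * cmt (X k) (Y k) := by
    simp [cmt, mul_assoc]
  rw [cmt]
  rw [show (X k ^ m)⁻¹ * (Y k)⁻¹ * X k ^ m * Y k
      = (X k ^ m)⁻¹ * ((Y k)⁻¹ * X k ^ m * Y k) by group]
  rw [conj_zpow' (Y k) (X k) m, hc]
  rw [((hCX k).symm).mul_zpow]
  group
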